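/- Let X, Y be disjoint sets of distinct reals, N = |X| + |Y|, x ∈ X, X' = X \ {x}, and x* a real distinct from all values in X' ∪ Y, X* = {x*} ∪ X'. If |rank(x*, X*∪Y) - (N+1)/2| equals 0 when N is odd (respectively 1/2 when N is even), then T(X,Y) ≥ T(X*,Y), i.e., placing the replaced value at the central rank minimizes the Ansari-Bradley statistic over the single missing value. -/

import Mathlib

open Finset

/-- rank of `x` in `Z`: number of elements of `Z` less than or equal to `x`. -/
noncomputable def rk (x : ℝ) (Z : Finset ℝ) : ℕ := (Z.filter (fun z => z ≤ x)).card

/-- Ansari-Bradley test statistic. -/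
noncomputable def ABT (A B : Finset ℝ) : ℝ :=
  ∑ a ∈ A, |(rk a (A ∪ B) : ℝ) - (((A ∪ B).card : ℝ) + 1) / 2|

lemma rk_mono {a b : ℝ} (Z : Finset ℝ) (h : a ≤ b) : rk a Z ≤ rk b Z := by
  apply card_le_card
  intro z hz
  simp only [mem_filter] at *
  exact ⟨hz.1, hz.2.trans h⟩

lemma rk_strict {a b : ℝ} (Z : Finset ℝ) (hb : b ∈ Z) (h : a < b) : rk a Z < rk b Z := by
  apply card_lt_card
  rw [Finset.ssubset_iff_of_subset]
  · exact ⟨b, mem_filter.2 ⟨hb, le_refl b⟩, fun hm => absurd (mem_filter.1 hm).2 (not_le.2 h)⟩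
  · intro z hz
    simp only [mem_filter] at *
    exact ⟨hz.1, hz.2.trans h.le⟩

lemma rk_insert (a t : ℝ) (Z : Finset ℝ) (ht : t ∉ Z) :
    rk a (insert t Z) = (if t ≤ a then 1 else 0) + rk a Z := by
  unfold rk
  rw [filter_insert]
  split
  · rw [card_insert_of_notMem (fun h => ht (mem_filter.1 h).1)]; omega
  · simp

lemma rk_split {x xs : ℝ} (W : Finset ℝ) (hx : x ∉ W) (hlt : xs < x) :
    rk x W = rk xs W + (W.filter (fun w => xs < w ∧ w < x)).card := by
  unfold rk
  have he : W.filter (fun z => z ≤ x)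
      = W.filter (fun z => z ≤ xs) ∪ W.filter (fun w => xs < w ∧ w < x) := by
    ext w
    simp only [mem_filter, mem_union]
    constructor
    · rintro ⟨hw, hwx⟩
      rcases le_or_gt w xs with h | h
      · exact Or.inl ⟨hw, h⟩
      · exact Or.inr ⟨hw, h, lt_of_le_of_ne hwx (fun e => hx (e ▸ hw))⟩
    · rintro (⟨hw, h⟩ | ⟨hw, h1, h2⟩)
      · exact ⟨hw, h.trans hlt.le⟩
      · exact ⟨hw, h2.le⟩
  rw [he, card_union_of_disjoint]
  rw [disjoint_left]
  intro z hz1 hz2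
  simp only [mem_filter] at *
  linarith [hz1.2, hz2.2.1]

lemma core (W X' : Finset ℝ) (hX'W : X' ⊆ W) (x xs : ℝ)
    (hx : x ∉ W) (hxs : xs ∉ W) (hlt : xs < x)
    (hm : |(rk xs (insert xs W) : ℝ) - ((W.card : ℝ) + 2) / 2| ≤ 1 / 2) :
    ∑ a ∈ insert xs X', |(rk a (insert xs W) : ℝ) - ((W.card : ℝ) + 2) / 2|
      ≤ ∑ a ∈ insert x X', |(rk a (insert x W) : ℝ) - ((W.card : ℝ) + 2) / 2| := by
  set c : ℝ := ((W.card : ℝ) + 2) / 2 with hc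
  have hxX' : x ∉ X' := fun h => hx (hX'W h)
  have hxsX' : xs ∉ X' := fun h => hxs (hX'W h)
  rw [Finset.sum_insert hxX', Finset.sum_insert hxsX']
  rw [← Finset.sum_filter_add_sum_filter_not X' (fun a => xs < a ∧ a < x)
    (fun a => |(rk a (insert xs W) : ℝ) - c|)]
  rw [← Finset.sum_filter_add_sum_filter_not X' (fun a => xs < a ∧ a < x)
    (fun a => |(rk a (insert x W) : ℝ) - c|)]
  -- the not-between sums are equal
  have hnb : ∑ a ∈ X'.filter (fun a => ¬(xs < a ∧ a < x)),
        |(rk a (insert xs W) : ℝ) - c|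
      = ∑ a ∈ X'.filter (fun a => ¬(xs < a ∧ a < x)),
        |(rk a (insert x W) : ℝ) - c| := by
    apply Finset.sum_congr rfl
    intro a ha
    simp only [mem_filter] at ha
    obtain ⟨haX', hnp⟩ := ha
    have haW : a ∈ W := hX'W haX'
    have hax : a ≠ x := fun e => hx (e ▸ haW)
    have haxs : a ≠ xs := fun e => hxs (e ▸ haW)
    rw [rk_insert a x W hx, rk_insert a xs W hxs]
    congr 2
    push_neg at hnp
    split_ifs with h1 h2 h2
    · rfl
    · exact absurd (hnp (lt_of_le_of_ne h1 (Ne.symm haxs))) h2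
    · exact absurd (hlt.le.trans h2) h1
    · rfl
  rw [hnb]
  -- reduce to between elements
  set B := X'.filter (fun a => xs < a ∧ a < x) with hB
  set Wp := W.filter (fun w => xs < w ∧ w < x) with hWp
  set k := Wp.card with hk
  have hBsub : B ⊆ Wp := by
    intro a ha
    simp only [hB, hWp, mem_filter] at *
    exact ⟨hX'W ha.1, ha.2⟩
  set S : ℕ := rk xs W + 1 with hS
  have hsxs : rk xs (insert xs W) = S := by
    rw [rk_insert xs xs W hxs, if_pos le_rfl, hS]
    omega
  have hsx : rk x (insert x W) = S + k := by
    rw [rk_insert x x W hx, if_pos le_rfl, rk_split W hx hlt, ← hWp]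
    omega
  have hBxs : ∀ a ∈ B, rk a (insert xs W) = rk a W + 1 := by
    intro a ha
    simp only [hB, mem_filter] at ha
    rw [rk_insert a xs W hxs, if_pos ha.2.1.le]
    omega
  have hBx : ∀ a ∈ B, rk a (insert x W) = rk a W := by
    intro a ha
    simp only [hB, mem_filter] at ha
    rw [rk_insert a x W hx, if_neg (not_le.2 ha.2.2)]
    omega
  have hBrk : ∀ a ∈ Wp, S ≤ rk a W := by
    intro a ha
    simp only [hWp, mem_filter] at ha
    exact rk_strict W ha.1 ha.2.1
  -- rewrite the sums over B
  have e1 : ∑ a ∈ B, |(rk a (insert xs W) : ℝ) - c|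
      = ∑ a ∈ B, |((rk a W : ℝ) + 1) - c| := by
    apply Finset.sum_congr rfl
    intro a ha
    rw [hBxs a ha]
    push_cast
    ring_nf
  have e2 : ∑ a ∈ B, |(rk a (insert x W) : ℝ) - c|
      = ∑ a ∈ B, |(rk a W : ℝ) - c| := by
    apply Finset.sum_congr rfl
    intro a ha
    rw [hBx a ha]
  rw [e1, e2, hsxs, hsx]
  set s : ℝ := (S : ℝ) with hs
  have hmm : |s - c| ≤ 1 / 2 := by rwa [hsxs] at hm
  set m : ℝ := |s - c| with hmdef
  have hm0 : 0 ≤ m := abs_nonneg _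
  have hk0 : (0 : ℝ) ≤ (k : ℝ) := Nat.cast_nonneg k
  have key : ∑ a ∈ B, (|((rk a W : ℝ) + 1) - c| - |(rk a W : ℝ) - c|)
      ≤ |((S + k : ℕ) : ℝ) - c| - m := by
    have hsk : ((S + k : ℕ) : ℝ) = s + k := by rw [hs]; push_cast; ring
    rw [hsk]
    have hrB : ∀ a ∈ B, s ≤ (rk a W : ℝ) := by
      intro a ha
      rw [hs]
      exact_mod_cast hBrk a (hBsub ha)
    rcases le_or_gt c s with hcs | hsc
    · -- case A : c ≤ s
      have hms : m = s - c := by rw [hmdef]; exact abs_of_nonneg (by linarith)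
      have hub : ∀ a ∈ B, |((rk a W : ℝ) + 1) - c| - |(rk a W : ℝ) - c| ≤ 1 := by
        intro a ha
        have hr := hrB a ha
        have h1 : |((rk a W : ℝ) + 1) - c| = (rk a W : ℝ) + 1 - c :=
          abs_of_nonneg (by linarith)
        have h2 : (rk a W : ℝ) - c ≤ |(rk a W : ℝ) - c| := le_abs_self _
        linarith
      have hcard : (B.card : ℝ) ≤ (k : ℝ) := by
        exact_mod_cast card_le_card hBsub
      have hsum := Finset.sum_le_card_nsmul B _ 1 hub
      simp only [nsmul_eq_mul, mul_one] at hsum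
      have habs2 : |s + (k : ℝ) - c| = s + k - c := abs_of_nonneg (by linarith)
      rw [habs2, hms]
      linarith
    · -- case B : s < c
      have hms : m = c - s := by rw [hmdef]; exact abs_of_neg (by linarith) |>.trans (by ring)
      rcases Nat.eq_zero_or_pos k with hkz | hkpos
      · have hkz' : Wp.card = 0 := by rw [← hk]; exact hkz
        have hWpe : Wp = ∅ := card_eq_zero.mp hkz'
        have hBe : B = ∅ := subset_empty.mp (hWpe ▸ hBsub)
        rw [hBe, hkz]
        simp only [Finset.sum_empty, Nat.cast_zero, add_zero, ← hmdef]
        linarith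
      · -- k ≥ 1
        have hWpne : Wp.Nonempty := by
          apply card_pos.mp
          rw [← hk]
          exact hkpos
        set a0 := Wp.min' hWpne with ha0
        have ha0mem : a0 ∈ Wp := Wp.min'_mem hWpne
        have ha0mem' : a0 ∈ W ∧ (xs < a0 ∧ a0 < x) := by
          have h := ha0mem
          rw [hWp] at h
          exact mem_filter.1 h
        have ha0W : a0 ∈ W := ha0mem'.1
        have ha0p : xs < a0 ∧ a0 < x := ha0mem'.2
        have hra0 : rk a0 W = S := by
          have hfe : W.filter (fun z => z ≤ a0) = insert a0 (W.filter (fun z => z ≤ xs)) := by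
            ext w
            simp only [mem_filter, mem_insert]
            constructor
            · rintro ⟨hwW, hwa0⟩
              by_cases hwxs : w ≤ xs
              · exact Or.inr ⟨hwW, hwxs⟩
              · left
                have hwWp : w ∈ Wp := by
                  rw [hWp]
                  exact mem_filter.2 ⟨hwW, not_le.1 hwxs, lt_of_le_of_lt hwa0 ha0p.2⟩
                exact le_antisymm hwa0 (Wp.min'_le w hwWp)
            · rintro (rfl | ⟨hwW, hwxs⟩)
              · exact ⟨ha0W, le_refl _⟩
              · exact ⟨hwW, hwxs.trans ha0p.1.le⟩
          have hnm : a0 ∉ W.filter (fun z => z ≤ xs) := by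
            intro h
            exact absurd (mem_filter.1 h).2 (not_le.2 ha0p.1)
          unfold rk
          rw [hfe, card_insert_of_notMem hnm, hS]
          rfl
        have hub : ∀ a ∈ B, |((rk a W : ℝ) + 1) - c| - |(rk a W : ℝ) - c|
            ≤ (if a = a0 then 1 - 2 * m else 1) := by
          intro a ha
          by_cases hea : a = a0
          · rw [if_pos hea, hea, hra0]
            have h1 : |(S:ℝ) + 1 - c| = (S:ℝ) + 1 - c := by
              apply abs_of_nonneg
              rw [← hs]
              linarith
            have h2 : |(S:ℝ) - c| = m := by rw [hmdef, hs]
            rw [h1, h2, ← hs]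
            linarith [hms]
          · rw [if_neg hea]
            have haWp : a ∈ Wp := hBsub ha
            have ha0lt : a0 < a :=
              lt_of_le_of_ne (Wp.min'_le a haWp) (fun e => hea e.symm)
            have hrlt : S < rk a W := by
              rw [← hra0]
              exact rk_strict W (by
                rw [hWp] at haWp
                exact (mem_filter.1 haWp).1) ha0lt
            have hr1 : s + 1 ≤ (rk a W : ℝ) := by
              rw [hs]
              exact_mod_cast hrlt
            have h1 : |((rk a W : ℝ) + 1) - c| = (rk a W : ℝ) + 1 - c :=
              abs_of_nonneg (by linarith)
            have h2 : |(rk a W : ℝ) - c| = (rk a W : ℝ) - c :=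
              abs_of_nonneg (by linarith)
            rw [h1, h2]
            ring_nf
            linarith
        have hub0 : ∀ a ∈ Wp, (0:ℝ) ≤ (if a = a0 then 1 - 2 * m else 1) := by
          intro a _
          split_ifs
          · linarith
          · linarith
        have step1 : ∑ a ∈ B, (|((rk a W : ℝ) + 1) - c| - |(rk a W : ℝ) - c|)
            ≤ ∑ a ∈ Wp, (if a = a0 then 1 - 2 * m else 1) := by
          calc ∑ a ∈ B, (|((rk a W : ℝ) + 1) - c| - |(rk a W : ℝ) - c|)
              ≤ ∑ a ∈ B, (if a = a0 then 1 - 2 * m else 1) := Finset.sum_le_sum hub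
            _ ≤ ∑ a ∈ Wp, (if a = a0 then 1 - 2 * m else 1) :=
                Finset.sum_le_sum_of_subset_of_nonneg hBsub (fun a haWp _ => hub0 a haWp)
        have step2 : ∑ a ∈ Wp, (if a = a0 then (1:ℝ) - 2 * m else 1) = k - 2 * m := by
          have : ∀ a ∈ Wp, (if a = a0 then (1:ℝ) - 2 * m else 1)
              = 1 - (if a = a0 then 2 * m else 0) := by
            intro a _
            split_ifs <;> ring
          rw [Finset.sum_congr rfl this, Finset.sum_sub_distrib, Finset.sum_const,
            Finset.sum_ite_eq' Wp a0 (fun _ => 2 * m), if_pos ha0mem]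
          simp [hk]
        have hk1 : (1 : ℝ) ≤ (k : ℝ) := by exact_mod_cast hkpos
        have habs2 : |s + (k : ℝ) - c| = s + k - c := abs_of_nonneg (by linarith [hms, hmm])
        rw [habs2]
        calc ∑ a ∈ B, (|((rk a W : ℝ) + 1) - c| - |(rk a W : ℝ) - c|)
            ≤ (k : ℝ) - 2 * m := step1.trans (le_of_eq step2)
          _ ≤ s + k - c - m := by linarith [hms]
  have hsplit : ∑ a ∈ B, (|((rk a W : ℝ) + 1) - c| - |(rk a W : ℝ) - c|)
      = ∑ a ∈ B, |((rk a W : ℝ) + 1) - c| - ∑ a ∈ B, |(rk a W : ℝ) - c| :=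
    Finset.sum_sub_distrib _ _
  rw [hsplit] at key
  linarith

lemma rk_neg (Z : Finset ℝ) (a : ℝ) (ha : a ∈ Z) :
    rk (-a) (Z.image (fun z => -z)) + rk a Z = Z.card + 1 := by
  have h1 : (Z.image (fun z => -z)).filter (fun z => z ≤ -a)
      = (Z.filter (fun z => a ≤ z)).image (fun z => -z) := by
    ext w
    simp only [mem_filter, mem_image]
    constructor
    · rintro ⟨⟨z, hz, rfl⟩, hle⟩
      exact ⟨z, ⟨hz, by linarith⟩, rfl⟩
    · rintro ⟨z, ⟨hz, hle⟩, rfl⟩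
      exact ⟨⟨z, hz, rfl⟩, by linarith⟩
  have h2 : rk (-a) (Z.image (fun z => -z)) = (Z.filter (fun z => a ≤ z)).card := by
    unfold rk
    rw [h1, card_image_of_injective _ neg_injective]
  have hu : Z.filter (fun z => a ≤ z) ∪ Z.filter (fun z => z ≤ a) = Z := by
    ext w
    simp only [mem_union, mem_filter]
    constructor
    · rintro (⟨h, _⟩ | ⟨h, _⟩) <;> exact h
    · intro h
      rcases le_total a w with hle | hle
      · exact Or.inl ⟨h, hle⟩
      · exact Or.inr ⟨h, hle⟩
  have hi : Z.filter (fun z => a ≤ z) ∩ Z.filter (fun z => z ≤ a) = {a} := by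
    ext w
    simp only [mem_inter, mem_filter, mem_singleton]
    constructor
    · rintro ⟨⟨_, h1⟩, ⟨_, h2⟩⟩
      linarith
    · rintro rfl
      exact ⟨⟨ha, le_refl _⟩, ⟨ha, le_refl _⟩⟩
  have := Finset.card_union_add_card_inter (Z.filter (fun z => a ≤ z)) (Z.filter (fun z => z ≤ a))
  rw [hu, hi, card_singleton] at this
  rw [h2]
  unfold rk
  omega

lemma sum_refl (A Z : Finset ℝ) (hA : A ⊆ Z) (c : ℝ) (hc : c = ((Z.card : ℝ) + 1) / 2) :
    ∑ a ∈ A.image (fun z => -z), |(rk a (Z.image (fun z => -z)) : ℝ) - c|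
      = ∑ a ∈ A, |(rk a Z : ℝ) - c| := by
  rw [Finset.sum_image (fun x _ y _ h => neg_injective h)]
  apply Finset.sum_congr rfl
  intro a ha
  have h := rk_neg Z a (hA ha)
  have h' : (rk (-a) (Z.image (fun z => -z)) : ℝ) = (Z.card : ℝ) + 1 - rk a Z := by
    have : (rk (-a) (Z.image (fun z => -z)) + rk a Z : ℝ) = (Z.card : ℝ) + 1 := by
      exact_mod_cast congrArg (Nat.cast : ℕ → ℝ) h
    linarith
  rw [h']
  have he : (Z.card : ℝ) + 1 - rk a Z - c = c - rk a Z := by rw [hc]; ring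
  rw [he, abs_sub_comm]

theorem stmt6 (X Y : Finset ℝ) (x xs : ℝ) (hd : Disjoint X Y) (hx : x ∈ X)
    (X' Xs : Finset ℝ) (hX' : X' = X.erase x) (hxs : xs ∉ X' ∪ Y)
    (hXs : Xs = insert xs X') (N : ℕ) (hN : N = X.card + Y.card)
    (habs : |(rk xs (Xs ∪ Y) : ℝ) - ((N : ℝ) + 1) / 2|
        = if Odd N then 0 else 1 / 2) :
    ABT X Y ≥ ABT Xs Y := by
  set W := X' ∪ Y with hW
  have hX'W : X' ⊆ W := subset_union_left
  have hxX' : x ∉ X' := by rw [hX']; exact notMem_erase x X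
  have hxY : x ∉ Y := disjoint_left.mp hd hx
  have hxW : x ∉ W := by
    rw [hW]
    simp only [mem_union]
    rintro (h | h)
    · exact hxX' h
    · exact hxY h
  have hxsW : xs ∉ W := hxs
  have hXeq : X = insert x X' := by rw [hX', insert_erase hx]
  have hXuY : X ∪ Y = insert x W := by rw [hXeq, hW, insert_union]
  have hXsY : Xs ∪ Y = insert xs W := by rw [hXs, hW, insert_union]
  have hcard : (X ∪ Y).card = W.card + 1 := by rw [hXuY, card_insert_of_notMem hxW]
  have hcards : (Xs ∪ Y).card = W.card + 1 := by rw [hXsY, card_insert_of_notMem hxsW]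
  have hNW : N = W.card + 1 := by
    rw [hN, ← card_union_of_disjoint hd, hcard]
  have hcc : (((W.card + 1 : ℕ) : ℝ) + 1) / 2 = ((W.card : ℝ) + 2) / 2 := by
    push_cast; ring
  have hA1 : ABT X Y = ∑ a ∈ insert x X', |(rk a (insert x W) : ℝ) - ((W.card : ℝ) + 2) / 2| := by
    unfold ABT
    rw [hXuY, hXeq, card_insert_of_notMem hxW, hcc]
  have hA2 : ABT Xs Y = ∑ a ∈ insert xs X', |(rk a (insert xs W) : ℝ) - ((W.card : ℝ) + 2) / 2| := by
    unfold ABT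
    rw [hXsY, hXs, card_insert_of_notMem hxsW, hcc]
  have hm : |(rk xs (insert xs W) : ℝ) - ((W.card : ℝ) + 2) / 2| ≤ 1 / 2 := by
    rw [← hXsY]
    have hc2 : ((W.card : ℝ) + 2) / 2 = ((N : ℝ) + 1) / 2 := by
      rw [hNW]; push_cast; ring
    rw [hc2, habs]
    split_ifs <;> norm_num
  rw [ge_iff_le, hA1, hA2]
  rcases lt_trichotomy xs x with h | h | h
  · exact core W X' hX'W x xs hxW hxsW h hm
  · rw [h]
  · -- x < xs : use reflection
    have hX''W : X'.image (fun z => -z) ⊆ W.image (fun z => -z) := image_subset_image hX'W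
    have hxW' : -x ∉ W.image (fun z => -z) := by
      simp only [mem_image, not_exists]
      rintro z ⟨hz, hze⟩
      exact hxW (neg_injective hze ▸ hz)
    have hxsW' : -xs ∉ W.image (fun z => -z) := by
      simp only [mem_image, not_exists]
      rintro z ⟨hz, hze⟩
      exact hxsW (neg_injective hze ▸ hz)
    have hcardW' : (W.image (fun z => -z)).card = W.card :=
      card_image_of_injective _ neg_injective
    have him_xs : (insert xs W).image (fun z => -z) = insert (-xs) (W.image (fun z => -z)) :=
      image_insert _ _ _
    have him_x : (insert x W).image (fun z => -z) = insert (-x) (W.image (fun z => -z)) :=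
      image_insert _ _ _
    have him_xsA : (insert xs X').image (fun z => -z) = insert (-xs) (X'.image (fun z => -z)) :=
      image_insert _ _ _
    have him_xA : (insert x X').image (fun z => -z) = insert (-x) (X'.image (fun z => -z)) :=
      image_insert _ _ _
    have hm' : |(rk (-xs) (insert (-xs) (W.image (fun z => -z))) : ℝ)
        - (((W.image (fun z => -z)).card : ℝ) + 2) / 2| ≤ 1 / 2 := by
      rw [← him_xs, hcardW']
      have hrel := rk_neg (insert xs W) xs (mem_insert_self xs W)
      rw [card_insert_of_notMem hxsW] at hrel
      have hrel' : (rk (-xs) ((insert xs W).image (fun z => -z)) : ℝ)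
          = (W.card : ℝ) + 2 - rk xs (insert xs W) := by
        have : (rk (-xs) ((insert xs W).image (fun z => -z)) + rk xs (insert xs W) : ℝ)
            = (W.card : ℝ) + 2 := by exact_mod_cast congrArg (Nat.cast : ℕ → ℝ) hrel
        linarith
      rw [hrel']
      have he : (W.card : ℝ) + 2 - rk xs (insert xs W) - ((W.card : ℝ) + 2) / 2
          = ((W.card : ℝ) + 2) / 2 - rk xs (insert xs W) := by ring
      rw [he, abs_sub_comm]
      exact hm
    have hcore := core (W.image (fun z => -z)) (X'.image (fun z => -z)) hX''W
      (-x) (-xs) hxW' hxsW' (by linarith) hm'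
    rw [← him_xsA, ← him_xA, ← him_xs, ← him_x, hcardW'] at hcore
    have hs1 := sum_refl (insert xs X') (insert xs W)
      (insert_subset_insert xs hX'W) (((W.card : ℝ) + 2) / 2)
      (by rw [card_insert_of_notMem hxsW]; push_cast; ring)
    have hs2 := sum_refl (insert x X') (insert x W)
      (insert_subset_insert x hX'W) (((W.card : ℝ) + 2) / 2)
      (by rw [card_insert_of_notMem hxW]; push_cast; ring)
    rw [hs1, hs2] at hcore
    exact hcore
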